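/- For W ∈ (0, 1/2) and integer N ≥ 2, ‖1_{[-W,W]} - (1/N) 1_{[-W,W]} ∗ |D_N|^2‖_{L^1(I)} ≤ C (log N)/N for an absolute constant C. -/

import Mathlib

open Real MeasureTheory intervalIntegral

/-- The Dirichlet kernel `D_N(x) = sin(Nπx)/sin(πx)`. -/
noncomputable def dirichletKernel (N : ℕ) (x : ℝ) : ℝ :=
  Real.sin (N * Real.pi * x) / Real.sin (Real.pi * x)


lemma ae_sin_pi_ne : ∀ᵐ x : ℝ, Real.sin (Real.pi * x) ≠ 0 := by
  have h : {x : ℝ | Real.sin (Real.pi * x) = 0} ⊆ Set.range (fun n : ℤ => (n : ℝ)) := by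
    intro x hx
    rw [Set.mem_setOf_eq, Real.sin_eq_zero_iff] at hx
    obtain ⟨n, hn⟩ := hx
    exact ⟨n, mul_left_cancel₀ Real.pi_ne_zero (by linarith)⟩
  have : volume {x : ℝ | Real.sin (Real.pi * x) = 0} = 0 :=
    measure_mono_null h ((Set.countable_range _).measure_zero _)
  exact (ae_iff).2 (by simpa using this)

lemma intervalIntegrable_of_bdd {f : ℝ → ℝ} (hm : Measurable f) {C a b : ℝ}
    (h : ∀ x ∈ Set.uIcc a b, |f x| ≤ C) : IntervalIntegrable f volume a b := by
  rw [intervalIntegrable_iff]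
  haveI : IsFiniteMeasure (volume.restrict (Set.uIoc a b)) :=
    ⟨by rw [Measure.restrict_apply_univ]; exact measure_Ioc_lt_top⟩
  apply MeasureTheory.Integrable.mono' (integrable_const C)
    hm.aestronglyMeasurable.restrict
  refine (ae_restrict_iff' measurableSet_uIoc).2 (Filter.Eventually.of_forall ?_)
  intro x hx
  simpa using h x (Set.uIoc_subset_uIcc hx)

lemma abs_sin_nat_mul_le (n : ℕ) (y : ℝ) : |Real.sin (n * y)| ≤ n * |Real.sin y| := by
  induction n with
  | zero => simp
  | succ n ih =>
    have : ((n:ℝ)+1) * y = n*y + y := by ring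
    rw [Nat.cast_succ, this, Real.sin_add]
    calc |Real.sin (n*y) * Real.cos y + Real.cos (n*y) * Real.sin y|
        ≤ |Real.sin (n*y) * Real.cos y| + |Real.cos (n*y) * Real.sin y| := abs_add_le _ _
      _ ≤ |Real.sin (n*y)| * 1 + 1 * |Real.sin y| := by
          rw [abs_mul, abs_mul]
          gcongr <;> first | exact Real.abs_cos_le_one _ | simp
      _ ≤ n * |Real.sin y| + 1 * |Real.sin y| := by rw [mul_one]; gcongr
      _ = ((n:ℝ)+1) * |Real.sin y| := by ring

lemma measurable_dk (N : ℕ) : Measurable (dirichletKernel N) := by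
  unfold dirichletKernel
  exact (Real.measurable_sin.comp (measurable_const.mul measurable_id)).div
    (Real.measurable_sin.comp (measurable_const.mul measurable_id))

lemma abs_dk_le (N : ℕ) (x : ℝ) : |dirichletKernel N x| ≤ N := by
  unfold dirichletKernel
  by_cases h : Real.sin (Real.pi * x) = 0
  · simp [h]
  · rw [abs_div, div_le_iff₀ (abs_pos.2 h)]
    calc |Real.sin (N * Real.pi * x)| = |Real.sin (N * (Real.pi * x))| := by ring_nf
      _ ≤ N * |Real.sin (Real.pi * x)| := abs_sin_nat_mul_le N _

lemma dk_sq_le (N : ℕ) (x : ℝ) : (dirichletKernel N x)^2 ≤ (N:ℝ)^2 := by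
  rw [← sq_abs]
  have := abs_dk_le N x
  nlinarith [abs_nonneg (dirichletKernel N x)]

lemma dk_intervalIntegrable (N : ℕ) (a b : ℝ) :
    IntervalIntegrable (fun x => (dirichletKernel N x)^2) volume a b := by
  apply intervalIntegrable_of_bdd ((measurable_dk N).pow_const 2) (C := (N:ℝ)^2)
  intro x _
  rw [abs_of_nonneg (sq_nonneg _)]
  exact dk_sq_le N x



lemma dk_int (N : ℕ) (a b : ℝ) : IntervalIntegrable (dirichletKernel N) volume a b :=
  intervalIntegrable_of_bdd (measurable_dk N) (fun x _ => abs_dk_le N x)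

lemma integral_cos_k (k : ℕ) (hk : 1 ≤ k) :
    ∫ x in (-(1:ℝ)/2)..(1/2), Real.cos (2*(k:ℝ)*Real.pi*x) = 0 := by
  have hkpos : (0:ℝ) < k := by exact_mod_cast hk
  have hc : (2*(k:ℝ)*Real.pi) ≠ 0 := by positivity
  calc ∫ x in (-(1:ℝ)/2)..(1/2), Real.cos (2*(k:ℝ)*Real.pi*x)
      = (2*(k:ℝ)*Real.pi)⁻¹ • ∫ x in (2*(k:ℝ)*Real.pi)*(-(1:ℝ)/2)..(2*(k:ℝ)*Real.pi)*(1/2), Real.cos x :=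
        integral_comp_mul_left _ hc
    _ = 0 := by
        rw [integral_cos]
        have h1 : (2*(k:ℝ)*Real.pi)*(1/2) = (k:ℝ)*Real.pi := by ring
        have h2 : (2*(k:ℝ)*Real.pi)*(-(1:ℝ)/2) = -((k:ℝ)*Real.pi) := by ring
        rw [h1, h2, Real.sin_neg, Real.sin_nat_mul_pi]
        simp

lemma odd_dk_integral (m : ℕ) :
    ∫ x in (-(1:ℝ)/2)..(1/2), dirichletKernel (2*m+1) x = 1 := by
  induction m with
  | zero =>
    have : ∫ x in (-(1:ℝ)/2)..(1/2), dirichletKernel 1 x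
        = ∫ x in (-(1:ℝ)/2)..(1/2), (1:ℝ) := by
      apply intervalIntegral.integral_congr_ae
      filter_upwards [ae_sin_pi_ne] with x hx _
      simp [dirichletKernel, div_self hx]
    rw [this]; simp; norm_num
  | succ m ih =>
    have key : ∀ x : ℝ, Real.sin (Real.pi*x) ≠ 0 →
        dirichletKernel (2*(m+1)+1) x
          = dirichletKernel (2*m+1) x + 2*Real.cos (2*((m:ℝ)+1)*Real.pi*x) := by
      intro x hx
      unfold dirichletKernel
      have a1 : ((2*(m+1)+1 : ℕ):ℝ)*Real.pi*x = (2*((m:ℝ)+1)*Real.pi*x) + Real.pi*x := by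
        push_cast; ring
      have a2 : ((2*m+1 : ℕ):ℝ)*Real.pi*x = (2*((m:ℝ)+1)*Real.pi*x) - Real.pi*x := by
        push_cast; ring
      rw [a1, a2, Real.sin_add, Real.sin_sub]
      field_simp
      ring
    have hcongr : ∫ x in (-(1:ℝ)/2)..(1/2), dirichletKernel (2*(m+1)+1) x
        = ∫ x in (-(1:ℝ)/2)..(1/2),
            (dirichletKernel (2*m+1) x + 2*Real.cos (2*((m:ℝ)+1)*Real.pi*x)) := by
      apply intervalIntegral.integral_congr_ae
      filter_upwards [ae_sin_pi_ne] with x hx _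
      exact key x hx
    have icos : IntervalIntegrable (fun x : ℝ => 2*Real.cos (2*((m:ℝ)+1)*Real.pi*x)) volume (-(1:ℝ)/2) (1/2) :=
      (continuous_const.mul (Real.continuous_cos.comp (continuous_const.mul continuous_id))).intervalIntegrable _ _
    rw [hcongr, intervalIntegral.integral_add (dk_int _ _ _) icos, ih]
    have : ∫ x in (-(1:ℝ)/2)..(1/2), 2*Real.cos (2*((m:ℝ)+1)*Real.pi*x) = 0 := by
      rw [intervalIntegral.integral_const_mul]
      have := integral_cos_k (m+1) (by omega)
      push_cast at this ⊢
      rw [this]; ring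
    rw [this]; ring

lemma dk_sq_integral (N : ℕ) :
    ∫ x in (-(1:ℝ)/2)..(1/2), (dirichletKernel N x)^2 = N := by
  induction N using Nat.twoStepInduction with
  | zero => simp [dirichletKernel]
  | one =>
    have : ∫ x in (-(1:ℝ)/2)..(1/2), (dirichletKernel 1 x)^2
        = ∫ x in (-(1:ℝ)/2)..(1/2), (1:ℝ) := by
      apply intervalIntegral.integral_congr_ae
      filter_upwards [ae_sin_pi_ne] with x hx _
      simp [dirichletKernel, div_self hx]
    rw [this]; simp; norm_num
  | more n ih _ =>
    have key : ∀ x : ℝ, Real.sin (Real.pi*x) ≠ 0 →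
        (dirichletKernel (n+2) x)^2
          = (dirichletKernel n x)^2 + (2*dirichletKernel (2*n+1) x - 2)
            + (2 + 2*Real.cos (2*((n:ℝ)+1)*Real.pi*x)) := by
      intro x hx
      have hD : dirichletKernel (n+2) x
          = dirichletKernel n x + 2*Real.cos (((n:ℝ)+1)*Real.pi*x) := by
        unfold dirichletKernel
        have a1 : ((n+2 : ℕ):ℝ)*Real.pi*x = (((n:ℝ)+1)*Real.pi*x) + Real.pi*x := by
          push_cast; ring
        have a2 : ((n : ℕ):ℝ)*Real.pi*x = (((n:ℝ)+1)*Real.pi*x) - Real.pi*x := by ring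
        rw [a1, a2, Real.sin_add, Real.sin_sub]
        field_simp
        ring
      have hcross : 4*Real.cos (((n:ℝ)+1)*Real.pi*x) * dirichletKernel n x
          = 2*dirichletKernel (2*n+1) x - 2 := by
        unfold dirichletKernel
        have b1 := Real.sin_add ((((n:ℝ)+1))*Real.pi*x) ((n:ℝ)*Real.pi*x)
        have b2 := Real.sin_sub ((((n:ℝ)+1))*Real.pi*x) ((n:ℝ)*Real.pi*x)
        have c1 : (((n:ℝ)+1))*Real.pi*x + (n:ℝ)*Real.pi*x = ((2*n+1 : ℕ):ℝ)*Real.pi*x := by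
          push_cast; ring
        have c2 : (((n:ℝ)+1))*Real.pi*x - (n:ℝ)*Real.pi*x = Real.pi*x := by ring
        rw [c1] at b1; rw [c2] at b2
        push_cast at b1 ⊢
        field_simp
        ring_nf at b1 b2 ⊢
        linear_combination (2:ℝ) * b2 - 2 * b1
      have hsq : 4*Real.cos (((n:ℝ)+1)*Real.pi*x)^2
          = 2 + 2*Real.cos (2*((n:ℝ)+1)*Real.pi*x) := by
        have := Real.cos_sq (((n:ℝ)+1)*Real.pi*x)
        have h2 : 2*((((n:ℝ)+1))*Real.pi*x) = 2*((n:ℝ)+1)*Real.pi*x := by ring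
        rw [h2] at this
        linarith
      calc (dirichletKernel (n+2) x)^2
          = (dirichletKernel n x)^2 + 4*Real.cos (((n:ℝ)+1)*Real.pi*x) * dirichletKernel n x
            + 4*Real.cos (((n:ℝ)+1)*Real.pi*x)^2 := by rw [hD]; ring
        _ = _ := by rw [hcross, hsq]
    have hcongr : ∫ x in (-(1:ℝ)/2)..(1/2), (dirichletKernel (n+2) x)^2
        = ∫ x in (-(1:ℝ)/2)..(1/2),
            ((dirichletKernel n x)^2 + (2*dirichletKernel (2*n+1) x - 2)
              + (2 + 2*Real.cos (2*((n:ℝ)+1)*Real.pi*x))) := by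
      apply intervalIntegral.integral_congr_ae
      filter_upwards [ae_sin_pi_ne] with x hx _
      exact key x hx
    have i1 : IntervalIntegrable (fun x => (dirichletKernel n x)^2) volume (-(1:ℝ)/2) (1/2) :=
      dk_intervalIntegrable n _ _
    have i2 : IntervalIntegrable (fun x => 2*dirichletKernel (2*n+1) x - 2) volume (-(1:ℝ)/2) (1/2) :=
      ((dk_int (2*n+1) _ _).const_mul 2).sub (intervalIntegrable_const)
    have hcont : Continuous (fun x : ℝ => 2*Real.cos (2*((n:ℝ)+1)*Real.pi*x)) :=
      continuous_const.mul (Real.continuous_cos.comp (continuous_const.mul continuous_id))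
    have i3 : IntervalIntegrable (fun x : ℝ => 2 + 2*Real.cos (2*((n:ℝ)+1)*Real.pi*x)) volume (-(1:ℝ)/2) (1/2) :=
      (continuous_const.add hcont).intervalIntegrable _ _
    have icos : IntervalIntegrable (fun x : ℝ => 2*Real.cos (2*((n:ℝ)+1)*Real.pi*x)) volume (-(1:ℝ)/2) (1/2) :=
      hcont.intervalIntegrable _ _
    rw [hcongr, intervalIntegral.integral_add (i1.add i2) i3, intervalIntegral.integral_add i1 i2, ih]
    have e2 : ∫ x in (-(1:ℝ)/2)..(1/2), (2*dirichletKernel (2*n+1) x - 2) = 0 := by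
      rw [intervalIntegral.integral_sub ((dk_int (2*n+1) _ _).const_mul 2) intervalIntegrable_const,
        intervalIntegral.integral_const_mul, odd_dk_integral]
      simp; norm_num
    have e3 : ∫ x in (-(1:ℝ)/2)..(1/2), (2 + 2*Real.cos (2*((n:ℝ)+1)*Real.pi*x)) = 2 := by
      rw [intervalIntegral.integral_add intervalIntegrable_const icos,
        intervalIntegral.integral_const_mul]
      have := integral_cos_k (n+1) (by omega)
      push_cast at this ⊢
      rw [this]
      simp; norm_num
    rw [e2, e3]
    push_cast; ring



lemma dk_sq_periodic (N : ℕ) : Function.Periodic (fun x => (dirichletKernel N x)^2) 1 := by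
  intro x
  have hcos : Real.cos ((N:ℝ)*Real.pi)^2 = 1 := by
    have h := Real.sin_sq_add_cos_sq ((N:ℝ)*Real.pi)
    rw [Real.sin_nat_mul_pi] at h
    nlinarith
  simp only [dirichletKernel, div_pow]
  have h1 : Real.sin ((N:ℝ)*Real.pi*(x+1))^2 = Real.sin ((N:ℝ)*Real.pi*x)^2 := by
    have : (N:ℝ)*Real.pi*(x+1) = (N:ℝ)*Real.pi*x + (N:ℝ)*Real.pi := by ring
    rw [this, Real.sin_add, Real.sin_nat_mul_pi]
    nlinarith [hcos]
  have h2 : Real.sin (Real.pi*(x+1))^2 = Real.sin (Real.pi*x)^2 := by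
    have : Real.pi*(x+1) = Real.pi*x + Real.pi := by ring
    rw [this, Real.sin_add, Real.sin_pi, Real.cos_pi]
    ring
  rw [h1, h2]

lemma dk_sq_even (N : ℕ) (x : ℝ) :
    (dirichletKernel N (-x))^2 = (dirichletKernel N x)^2 := by
  unfold dirichletKernel
  rw [show (N:ℝ)*Real.pi*(-x) = -((N:ℝ)*Real.pi*x) by ring,
    show Real.pi*(-x) = -(Real.pi*x) by ring,
    Real.sin_neg, Real.sin_neg, neg_div_neg_eq]

noncomputable def Gfun (N : ℕ) (u : ℝ) : ℝ :=
  (1/(N:ℝ)) * ∫ t in (0:ℝ)..u, (dirichletKernel N t)^2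

lemma Gfun_sub (N : ℕ) (a b : ℝ) :
    Gfun N b - Gfun N a = (1/(N:ℝ)) * ∫ t in a..b, (dirichletKernel N t)^2 := by
  unfold Gfun
  rw [← mul_sub]
  congr 1
  rw [intervalIntegral.integral_interval_sub_left (dk_intervalIntegrable N 0 b)
    (dk_intervalIntegrable N 0 a)]

lemma int_K_period (N : ℕ) (a : ℝ) :
    ∫ t in a..(a+1), (dirichletKernel N t)^2 = N := by
  rw [(dk_sq_periodic N).intervalIntegral_add_eq a (-(1:ℝ)/2)]
  rw [show (-(1:ℝ)/2 + 1) = 1/2 by norm_num]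
  exact dk_sq_integral N

lemma Gfun_add_one (N : ℕ) (hN : 1 ≤ N) (u : ℝ) : Gfun N (u+1) = Gfun N u + 1 := by
  have h := Gfun_sub N u (u+1)
  rw [int_K_period] at h
  have hN0 : ((N:ℝ)) ≠ 0 := by positivity
  field_simp at h
  linarith

lemma Gfun_mono (N : ℕ) {a b : ℝ} (hab : a ≤ b) : Gfun N a ≤ Gfun N b := by
  have h := Gfun_sub N a b
  have hpos : 0 ≤ ∫ t in a..b, (dirichletKernel N t)^2 :=
    intervalIntegral.integral_nonneg hab (fun x _ => sq_nonneg _)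
  have : (0:ℝ) ≤ 1/(N:ℝ) := by positivity
  nlinarith

lemma Gfun_zero (N : ℕ) : Gfun N 0 = 0 := by simp [Gfun]

lemma Gfun_half (N : ℕ) (hN : 1 ≤ N) : Gfun N (1/2) = 1/2 := by
  have heven : ∫ t in (-(1:ℝ)/2)..0, (dirichletKernel N t)^2
      = ∫ t in (0:ℝ)..(1/2), (dirichletKernel N t)^2 := by
    have h := integral_comp_neg (a := (0:ℝ)) (b := 1/2) (fun t => (dirichletKernel N t)^2)
    simp only [dk_sq_even] at h
    rw [h, neg_zero]
    rw [show (-(1:ℝ)/2) = -(1/2) by norm_num]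
  have hsplit : (∫ t in (-(1:ℝ)/2)..0, (dirichletKernel N t)^2)
      + ∫ t in (0:ℝ)..(1/2), (dirichletKernel N t)^2 = N := by
    rw [intervalIntegral.integral_add_adjacent_intervals (dk_intervalIntegrable N _ _)
      (dk_intervalIntegrable N _ _)]
    exact dk_sq_integral N
  have hval : ∫ t in (0:ℝ)..(1/2), (dirichletKernel N t)^2 = (N:ℝ)/2 := by
    rw [heven] at hsplit; linarith
  have hN0 : ((N:ℝ)) ≠ 0 := by
    have : (0:ℝ) < N := by exact_mod_cast hN
    positivity
  unfold Gfun
  rw [hval]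
  field_simp

lemma Gfun_one_sub (N : ℕ) (hN : 1 ≤ N) (x : ℝ) : Gfun N (1-x) = 1 - Gfun N x := by
  have h1 : Gfun N 1 - Gfun N (1-x) = (1/(N:ℝ)) * ∫ t in (1-x)..1, (dirichletKernel N t)^2 :=
    Gfun_sub N (1-x) 1
  have hshift : ∫ t in (1-x)..(1:ℝ), (dirichletKernel N t)^2
      = ∫ t in (-x)..(0:ℝ), (dirichletKernel N t)^2 := by
    have h := integral_comp_add_right (a := -x) (b := (0:ℝ))
      (fun t => (dirichletKernel N t)^2) 1
    have hper : (fun t : ℝ => (dirichletKernel N (t+1))^2)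
        = fun t : ℝ => (dirichletKernel N t)^2 := by
      funext t; exact dk_sq_periodic N t
    rw [hper] at h
    have hb : (∫ t in (-x+1)..((0:ℝ)+1), (dirichletKernel N t)^2)
        = ∫ t in (1-x)..(1:ℝ), (dirichletKernel N t)^2 := by
      rw [show -x+1 = 1-x by ring, show (0:ℝ)+1 = 1 by norm_num]
    rw [← hb, ← h]
  have heven : ∫ t in (-x)..(0:ℝ), (dirichletKernel N t)^2
      = ∫ t in (0:ℝ)..x, (dirichletKernel N t)^2 := by
    have h := integral_comp_neg (a := (0:ℝ)) (b := x) (fun t => (dirichletKernel N t)^2)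
    simp only [dk_sq_even] at h
    rw [h, neg_zero]
  have hG1 : Gfun N 1 = 1 := by
    have := Gfun_add_one N hN 0
    rw [Gfun_zero] at this
    simpa using this
  have : Gfun N x - Gfun N 0 = (1/(N:ℝ)) * ∫ t in (0:ℝ)..x, (dirichletKernel N t)^2 :=
    Gfun_sub N 0 x
  rw [Gfun_zero, sub_zero] at this
  rw [hshift, heven, ← this, hG1] at h1
  linarith




noncomputable def efun (N : ℕ) (u : ℝ) : ℝ := Gfun N u - (⌊u⌋ : ℝ) - 1/2

lemma continuous_Gfun (N : ℕ) : Continuous (Gfun N) :=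
  continuous_const.mul
    (intervalIntegral.continuous_primitive (fun a b => dk_intervalIntegrable N a b) 0)

lemma measurable_floor_cast : Measurable (fun u : ℝ => (⌊u⌋ : ℝ)) :=
  Measurable.comp (measurable_from_top : Measurable (Int.cast : ℤ → ℝ)) Int.measurable_floor

lemma measurable_efun (N : ℕ) : Measurable (efun N) :=
  ((continuous_Gfun N).measurable.sub measurable_floor_cast).sub measurable_const

lemma efun_periodic (N : ℕ) (hN : 1 ≤ N) : Function.Periodic (efun N) 1 := by
  intro u
  unfold efun
  rw [Gfun_add_one N hN, Int.floor_add_one]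
  push_cast
  ring

lemma efun_half_bound (N : ℕ) (hN : 1 ≤ N) :
    ∀ u ∈ Set.Icc (0:ℝ) (1/2), |efun N u| ≤ 1/2 := by
  intro u hu
  obtain ⟨h0, h1⟩ := hu
  have hfl : ⌊u⌋ = 0 := Int.floor_eq_zero_iff.2 ⟨h0, by linarith⟩
  have hG0 : 0 ≤ Gfun N u := by
    have := Gfun_mono N h0; rw [Gfun_zero] at this; exact this
  have hGh : Gfun N u ≤ 1/2 := by
    have := Gfun_mono N h1; rwa [Gfun_half N hN] at this
  unfold efun
  rw [hfl, abs_le]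
  constructor <;> simp <;> linarith

lemma efun_tail (N : ℕ) (hN : 1 ≤ N) {u : ℝ} (hu0 : 0 < u) (hu : u ≤ 1/2) :
    |efun N u| ≤ 1/(4*(N:ℝ)*u) := by
  have hNR : (1:ℝ) ≤ N := by exact_mod_cast hN
  have hKb : ∀ t ∈ Set.Icc u (1/2:ℝ), (dirichletKernel N t)^2 ≤ (1/4) * t^(-2:ℤ) := by
    intro t ht
    obtain ⟨ht0, ht1⟩ := ht
    have htpos : 0 < t := lt_of_lt_of_le hu0 ht0
    have hsin : 2*t ≤ Real.sin (Real.pi*t) := by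
      have h := Real.mul_le_sin (x := Real.pi*t) (by positivity)
        (by nlinarith [Real.pi_pos])
      have h2 : 2/Real.pi * (Real.pi*t) = 2*t := by
        field_simp
      linarith [h2 ▸ h]
    have hsq : (2*t)^2 ≤ Real.sin (Real.pi*t)^2 := by nlinarith
    have hnum : Real.sin ((N:ℝ)*Real.pi*t)^2 ≤ 1 := by
      nlinarith [Real.sin_sq_add_cos_sq ((N:ℝ)*Real.pi*t), sq_nonneg (Real.cos ((N:ℝ)*Real.pi*t))]
    have hzp : (t:ℝ)^(-2:ℤ) = ((2*t)^2)⁻¹ * 4 := by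
      rw [show (-2:ℤ) = -(2:ℤ) from rfl, zpow_neg]
      have : (t:ℝ)^(2:ℤ) = t^2 := by rw [zpow_two, sq]
      rw [this]
      field_simp
      ring
    unfold dirichletKernel
    rw [div_pow, hzp]
    have hd : (0:ℝ) < (2*t)^2 := by positivity
    calc Real.sin ((N:ℝ)*Real.pi*t)^2 / Real.sin (Real.pi*t)^2
        ≤ 1 / (2*t)^2 := div_le_div₀ (by norm_num) hnum hd hsq
      _ = (1/4) * (((2*t)^2)⁻¹ * 4) := by field_simp
  have hint : (∫ t in u..(1/2:ℝ), (dirichletKernel N t)^2)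
      ≤ ∫ t in u..(1/2:ℝ), (1/4) * t^(-2:ℤ) := by
    apply intervalIntegral.integral_mono_on hu (dk_intervalIntegrable N _ _)
    · apply ContinuousOn.intervalIntegrable
      apply ContinuousOn.mul continuousOn_const
      apply ContinuousOn.zpow₀ continuousOn_id
      intro a ha
      rw [Set.uIcc_of_le hu] at ha
      exact Or.inl (ne_of_gt (lt_of_lt_of_le hu0 ha.1))
    · exact hKb
  have hval : (∫ t in u..(1/2:ℝ), (1/4) * t^(-2:ℤ)) = (1/4) * (1/u - 2) := by
    rw [intervalIntegral.integral_const_mul]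
    rw [integral_zpow (Or.inr ⟨by norm_num, by
      rw [Set.uIcc_of_le hu]; intro h; exact absurd h.1 (not_le.2 hu0)⟩)]
    norm_num
    ring
  have heval : efun N u = Gfun N u - 1/2 := by
    unfold efun
    rw [Int.floor_eq_zero_iff.2 ⟨le_of_lt hu0, by linarith⟩]
    push_cast; ring
  have hGle : Gfun N u ≤ 1/2 := by
    have := Gfun_mono N hu; rwa [Gfun_half N hN] at this
  have habs : |efun N u| = Gfun N (1/2) - Gfun N u := by
    rw [heval, abs_of_nonpos (by linarith), Gfun_half N hN]; ring
  rw [habs, Gfun_sub N u (1/2)]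
  have hNpos : (0:ℝ) < N := by linarith
  have h1 : (1/(N:ℝ)) * ∫ t in u..(1/2:ℝ), (dirichletKernel N t)^2
      ≤ (1/(N:ℝ)) * ((1/4) * (1/u - 2)) := by
    rw [← hval]
    apply mul_le_mul_of_nonneg_left hint (by positivity)
  calc (1/(N:ℝ)) * ∫ t in u..(1/2:ℝ), (dirichletKernel N t)^2
      ≤ (1/(N:ℝ)) * ((1/4) * (1/u - 2)) := h1
    _ ≤ 1/(4*(N:ℝ)*u) := by
        have he : 1/(N:ℝ) * (1/4*(1/u-2)) = 1/(4*(N:ℝ)*u) - 1/(2*(N:ℝ)) := by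
          field_simp
          ring
        rw [he]
        have hp : 0 < 1/(2*(N:ℝ)) := by positivity
        linarith

lemma efun_bdd (N : ℕ) (hN : 1 ≤ N) {u : ℝ} (h1 : -1 ≤ u) (h2 : u ≤ 1) :
    |efun N u| ≤ (N:ℝ) + 3 := by
  have hNR : (1:ℝ) ≤ N := by exact_mod_cast hN
  have hu : |u| ≤ 1 := abs_le.2 ⟨h1, h2⟩
  have hInt := intervalIntegral.norm_integral_le_of_norm_le_const (C := (N:ℝ)^2)
    (f := fun t => (dirichletKernel N t)^2) (a := 0) (b := u)
    (fun x _ => by rw [Real.norm_eq_abs, abs_of_nonneg (sq_nonneg _)]; exact dk_sq_le N x)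
  have hG : |Gfun N u| ≤ (N:ℝ) := by
    unfold Gfun
    rw [abs_mul, abs_of_nonneg (by positivity : (0:ℝ) ≤ 1/(N:ℝ))]
    rw [Real.norm_eq_abs] at hInt
    have : |∫ t in (0:ℝ)..u, (dirichletKernel N t)^2| ≤ (N:ℝ)^2 := by
      calc |∫ t in (0:ℝ)..u, (dirichletKernel N t)^2| ≤ (N:ℝ)^2 * |u - 0| := hInt
        _ ≤ (N:ℝ)^2 * 1 := by
            apply mul_le_mul_of_nonneg_left _ (by positivity)
            rw [sub_zero]; exact hu
        _ = (N:ℝ)^2 := mul_one _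
    calc 1/(N:ℝ) * |∫ t in (0:ℝ)..u, (dirichletKernel N t)^2|
        ≤ 1/(N:ℝ) * (N:ℝ)^2 := mul_le_mul_of_nonneg_left this (by positivity)
      _ = (N:ℝ) := by field_simp
  have hfl1 : (⌊u⌋:ℝ) ≤ u := Int.floor_le u
  have hfl2 : u - 1 < (⌊u⌋:ℝ) := by linarith [Int.lt_floor_add_one u]
  have hGa := abs_le.1 hG
  unfold efun
  rw [abs_le]
  constructor <;> [nlinarith [hGa.1]; nlinarith [hGa.2]]

lemma abs_efun_intInt (N : ℕ) (hN : 1 ≤ N) (a b : ℝ)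
    (ha : Set.uIcc a b ⊆ Set.Icc (-1:ℝ) 1) :
    IntervalIntegrable (fun u => |efun N u|) volume a b := by
  apply intervalIntegrable_of_bdd ((measurable_efun N).abs) (C := (N:ℝ)+3)
  intro x hx
  rw [abs_abs]
  exact efun_bdd N hN (ha hx).1 (ha hx).2

lemma efun_L1_half (N : ℕ) (hN : 2 ≤ N) :
    ∫ u in (0:ℝ)..(1/2), |efun N u| ≤ 1/(4*(N:ℝ)) + Real.log N/(4*(N:ℝ)) := by
  have hN1 : 1 ≤ N := by omega
  have hNR : (2:ℝ) ≤ N := by exact_mod_cast hN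
  set a : ℝ := 1/(2*(N:ℝ)) with ha_def
  have ha0 : 0 < a := by positivity
  have ha2 : a ≤ 1/2 := by
    rw [ha_def, div_le_div_iff₀ (by positivity) (by norm_num)]
    linarith
  have i1 : IntervalIntegrable (fun u => |efun N u|) volume 0 a :=
    abs_efun_intInt N hN1 0 a (by
      rw [Set.uIcc_of_le (le_of_lt ha0)]
      intro x hx; exact ⟨by linarith [hx.1], by linarith [hx.2, ha2]⟩)
  have i2 : IntervalIntegrable (fun u => |efun N u|) volume a (1/2) :=
    abs_efun_intInt N hN1 a (1/2) (by
      rw [Set.uIcc_of_le ha2]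
      intro x hx; exact ⟨by linarith [hx.1, ha0.le], by linarith [hx.2]⟩)
  rw [← intervalIntegral.integral_add_adjacent_intervals i1 i2]
  have b1 : ∫ u in (0:ℝ)..a, |efun N u| ≤ 1/(4*(N:ℝ)) := by
    calc ∫ u in (0:ℝ)..a, |efun N u| ≤ ∫ _ in (0:ℝ)..a, (1/2:ℝ) := by
          apply intervalIntegral.integral_mono_on (le_of_lt ha0) i1 intervalIntegrable_const
          intro x hx
          exact efun_half_bound N hN1 x ⟨hx.1, le_trans hx.2 ha2⟩
      _ = 1/(4*(N:ℝ)) := by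
          rw [intervalIntegral.integral_const, smul_eq_mul]
          rw [ha_def]; field_simp; ring
  have b2 : ∫ u in a..(1/2:ℝ), |efun N u| ≤ Real.log N/(4*(N:ℝ)) := by
    have hmono : ∫ u in a..(1/2:ℝ), |efun N u|
        ≤ ∫ u in a..(1/2:ℝ), (1/(4*(N:ℝ))) * (1/u) := by
      apply intervalIntegral.integral_mono_on ha2 i2
      · apply ContinuousOn.intervalIntegrable
        apply ContinuousOn.mul continuousOn_const
        apply ContinuousOn.div continuousOn_const continuousOn_id
        intro x hx
        rw [Set.uIcc_of_le ha2] at hx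
        exact ne_of_gt (lt_of_lt_of_le ha0 hx.1)
      · intro x hx
        have hx0 : 0 < x := lt_of_lt_of_le ha0 hx.1
        have := efun_tail N hN1 hx0 hx.2
        calc |efun N x| ≤ 1/(4*(N:ℝ)*x) := this
          _ = (1/(4*(N:ℝ))) * (1/x) := by field_simp
    have hval : ∫ u in a..(1/2:ℝ), (1/(4*(N:ℝ))) * (1/u)
        = (1/(4*(N:ℝ))) * Real.log N := by
      rw [intervalIntegral.integral_const_mul, integral_one_div (by
        rw [Set.uIcc_of_le ha2]; intro h; exact absurd h.1 (not_le.2 ha0))]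
      congr 1
      rw [ha_def]
      congr 1
      field_simp
    rw [hval] at hmono
    calc ∫ u in a..(1/2:ℝ), |efun N u| ≤ (1/(4*(N:ℝ))) * Real.log N := hmono
      _ = Real.log N/(4*(N:ℝ)) := by ring
  linarith

lemma efun_L1_two (N : ℕ) (hN : 2 ≤ N) :
    ∫ u in (-1:ℝ)..1, |efun N u| ≤ 1/(N:ℝ) + Real.log N/(N:ℝ) := by
  have hN1 : 1 ≤ N := by omega
  have ihalf1 : IntervalIntegrable (fun u => |efun N u|) volume 0 (1/2) :=
    abs_efun_intInt N hN1 0 (1/2) (by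
      rw [Set.uIcc_of_le (by norm_num)]
      intro x hx; exact ⟨by linarith [hx.1], by linarith [hx.2]⟩)
  have ihalf2 : IntervalIntegrable (fun u => |efun N u|) volume (1/2) 1 :=
    abs_efun_intInt N hN1 (1/2) 1 (by
      rw [Set.uIcc_of_le (by norm_num)]
      intro x hx; exact ⟨by linarith [hx.1], hx.2⟩)
  have ione : IntervalIntegrable (fun u => |efun N u|) volume 0 1 :=
    ihalf1.trans ihalf2
  have hq : ∫ u in (1/2:ℝ)..1, |efun N u| = ∫ u in (0:ℝ)..(1/2), |efun N u| := by
    have h := integral_comp_sub_left (a := (0:ℝ)) (b := 1/2) (fun t => |efun N t|) 1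
    rw [show (1:ℝ)-1/2 = 1/2 by norm_num, show (1:ℝ)-0 = 1 by norm_num] at h
    rw [← h]
    apply intervalIntegral.integral_congr_ae
    apply Filter.Eventually.of_forall
    intro x hx
    rw [Set.uIoc_of_le (by norm_num : (0:ℝ) ≤ 1/2)] at hx
    have hx0 : 0 < x := hx.1
    have hx2 : x ≤ 1/2 := hx.2
    have hfl : ⌊(1:ℝ)-x⌋ = 0 := Int.floor_eq_zero_iff.2 ⟨by linarith, by linarith⟩
    have hfl2 : ⌊x⌋ = 0 := Int.floor_eq_zero_iff.2 ⟨by linarith, by linarith⟩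
    have : efun N (1-x) = -(efun N x) := by
      unfold efun
      rw [Gfun_one_sub N hN1, hfl, hfl2]
      push_cast; ring
    rw [this, abs_neg]
  have hneg : ∫ u in (-1:ℝ)..0, |efun N u| = ∫ u in (0:ℝ)..1, |efun N u| := by
    have hper : Function.Periodic (fun u => |efun N u|) 1 := fun u => by
      simp only []
      rw [efun_periodic N hN1 u]
    have h := hper.intervalIntegral_add_eq (-1 : ℝ) 0
    rw [show (-1:ℝ)+1 = 0 by norm_num, show (0:ℝ)+1 = 1 by norm_num] at h
    exact h
  have ineg : IntervalIntegrable (fun u => |efun N u|) volume (-1) 0 :=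
    abs_efun_intInt N hN1 (-1) 0 (by
      rw [Set.uIcc_of_le (by norm_num)]
      intro x hx; exact ⟨hx.1, by linarith [hx.2]⟩)
  rw [← intervalIntegral.integral_add_adjacent_intervals ineg ione, hneg,
    ← intervalIntegral.integral_add_adjacent_intervals ihalf1 ihalf2, hq]
  have := efun_L1_half N hN
  have hNR : (0:ℝ) < N := by positivity
  have heq : 4*(1/(4*(N:ℝ)) + Real.log N/(4*(N:ℝ))) = 1/(N:ℝ) + Real.log N/(N:ℝ) := by
    field_simp
  linarith






/-- For `W ∈ (0,1/2)` and `N ≥ 2`: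
`‖1_{[-W,W]} - (1/N) 1_{[-W,W]} ∗ |D_N|²‖_{L¹(I)} ≤ C (log N)/N`,
where `(1_{[-W,W]} ∗ |D_N|²)(x) = ∫_{-W}^{W} |D_N(x-y)|² dy`. -/
theorem indicator_approximation_bound :
    ∃ C : ℝ, 0 < C ∧ ∀ (N : ℕ), 2 ≤ N → ∀ W : ℝ, W ∈ Set.Ioo (0:ℝ) (1/2) →
      (∫ x in (-(1:ℝ)/2)..(1/2),
          |Set.indicator (Set.Icc (-W) W) (fun _ => (1:ℝ)) x
            - (1 / (N : ℝ)) * ∫ y in (-W)..W, (dirichletKernel N (x - y))^2|)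
        ≤ C * Real.log N / N := by
  refine ⟨5, by norm_num, ?_⟩
  intro N hN W hW
  obtain ⟨hW0, hW2⟩ := hW
  have hN1 : 1 ≤ N := by omega
  have hNR : (2:ℝ) ≤ N := by exact_mod_cast hN
  have hNpos : (0:ℝ) < N := by linarith
  -- rewrite convolution via the primitive
  have conv_eq : ∀ x : ℝ, (1/(N:ℝ)) * (∫ y in (-W)..W, (dirichletKernel N (x - y))^2)
      = Gfun N (x+W) - Gfun N (x-W) := by
    intro x
    have h := integral_comp_sub_left (a := -W) (b := W)
      (fun t => (dirichletKernel N t)^2) x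
    rw [show x - -W = x + W by ring] at h
    rw [h]
    exact (Gfun_sub N (x-W) (x+W)).symm
  -- a.e. rewrite of integrand
  have hmain : (∫ x in (-(1:ℝ)/2)..(1/2),
        |Set.indicator (Set.Icc (-W) W) (fun _ => (1:ℝ)) x
          - (1 / (N : ℝ)) * ∫ y in (-W)..W, (dirichletKernel N (x - y))^2|)
      = ∫ x in (-(1:ℝ)/2)..(1/2), |efun N (x+W) - efun N (x-W)| := by
    apply intervalIntegral.integral_congr_ae
    have hWae : ∀ᵐ x : ℝ, x ∉ ({W, -W} : Set ℝ) :=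
      MeasureTheory.measure_eq_zero_iff_ae_notMem.mp ((Set.toFinite _).measure_zero _)
    filter_upwards [hWae] with x hx hxI
    rw [Set.uIoc_of_le (by norm_num : (-(1:ℝ)/2) ≤ 1/2)] at hxI
    have hxl : -(1:ℝ)/2 < x := hxI.1
    have hxr : x ≤ 1/2 := hxI.2
    have hxW : x ≠ W := fun h => hx (by simp [h])
    have hxW' : x ≠ -W := fun h => hx (by simp [h])
    have hind : Set.indicator (Set.Icc (-W) W) (fun _ => (1:ℝ)) x
        = ((⌊x+W⌋:ℤ):ℝ) - ((⌊x-W⌋:ℤ):ℝ) := by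
      rcases lt_trichotomy x W with hc1 | hc1 | hc1
      · rcases lt_trichotomy x (-W) with hc2 | hc2 | hc2
        · -- x < -W : indicator 0, both floors -1
          have f1 : ⌊x+W⌋ = -1 := by
            rw [Int.floor_eq_iff]
            constructor <;> push_cast <;> linarith
          have f2 : ⌊x-W⌋ = -1 := by
            rw [Int.floor_eq_iff]
            constructor <;> push_cast <;> linarith
          rw [Set.indicator_of_notMem (by
            intro hmem; exact absurd hmem.1 (not_le.2 hc2)), f1, f2]
          norm_num
        · exact absurd hc2 hxW'
        · -- -W < x < W : indicator 1, floors 0 and -1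
          have f1 : ⌊x+W⌋ = 0 := Int.floor_eq_zero_iff.2 ⟨by linarith, by linarith⟩
          have f2 : ⌊x-W⌋ = -1 := by
            rw [Int.floor_eq_iff]
            constructor <;> push_cast <;> linarith
          rw [Set.indicator_of_mem (Set.mem_Icc.mpr ⟨by linarith, by linarith⟩) (fun _ => (1:ℝ)), f1, f2]
          norm_num
      · exact absurd hc1 hxW
      · -- W < x : indicator 0, both floors 0
        have f1 : ⌊x+W⌋ = 0 := Int.floor_eq_zero_iff.2 ⟨by linarith, by linarith⟩
        have f2 : ⌊x-W⌋ = 0 := Int.floor_eq_zero_iff.2 ⟨by linarith, by linarith⟩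
        rw [Set.indicator_of_notMem (by
          intro hmem; exact absurd hmem.2 (not_le.2 hc1)), f1, f2]
        norm_num
    rw [conv_eq x, hind]
    rw [show ((⌊x+W⌋:ℤ):ℝ) - ((⌊x-W⌋:ℤ):ℝ) - (Gfun N (x+W) - Gfun N (x-W))
        = efun N (x-W) - efun N (x+W) by unfold efun; ring]
    exact abs_sub_comm _ _
  rw [hmain]
  -- measurability of shifted efun's
  have m1 : Measurable (fun x => efun N (x+W)) :=
    (measurable_efun N).comp (measurable_add_const W)
  have m2 : Measurable (fun x => efun N (x-W)) :=
    (measurable_efun N).comp (measurable_sub_const W)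
  have hrange : ∀ x ∈ Set.uIcc (-(1:ℝ)/2) (1/2), (-1 ≤ x+W ∧ x+W ≤ 1) ∧ (-1 ≤ x-W ∧ x-W ≤ 1) := by
    intro x hx
    rw [Set.uIcc_of_le (by norm_num : (-(1:ℝ)/2) ≤ 1/2)] at hx
    obtain ⟨h1, h2⟩ := hx
    refine ⟨⟨by linarith, by linarith⟩, ⟨by linarith, by linarith⟩⟩
  have iL : IntervalIntegrable (fun x => |efun N (x+W) - efun N (x-W)|) volume (-(1:ℝ)/2) (1/2) := by
    apply intervalIntegrable_of_bdd ((m1.sub m2).abs) (C := 2*(N:ℝ)+6)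
    intro x hx
    obtain ⟨⟨a1, a2⟩, ⟨b1, b2⟩⟩ := hrange x hx
    rw [abs_abs]
    calc |efun N (x+W) - efun N (x-W)| ≤ |efun N (x+W)| + |efun N (x-W)| := abs_sub _ _
      _ ≤ ((N:ℝ)+3) + ((N:ℝ)+3) := add_le_add (efun_bdd N hN1 a1 a2) (efun_bdd N hN1 b1 b2)
      _ = 2*(N:ℝ)+6 := by ring
  have iR1 : IntervalIntegrable (fun x => |efun N (x+W)|) volume (-(1:ℝ)/2) (1/2) := by
    apply intervalIntegrable_of_bdd (m1.abs) (C := (N:ℝ)+3)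
    intro x hx
    obtain ⟨⟨a1, a2⟩, _⟩ := hrange x hx
    rw [abs_abs]; exact efun_bdd N hN1 a1 a2
  have iR2 : IntervalIntegrable (fun x => |efun N (x-W)|) volume (-(1:ℝ)/2) (1/2) := by
    apply intervalIntegrable_of_bdd (m2.abs) (C := (N:ℝ)+3)
    intro x hx
    obtain ⟨_, ⟨b1, b2⟩⟩ := hrange x hx
    rw [abs_abs]; exact efun_bdd N hN1 b1 b2
  have step1 : (∫ x in (-(1:ℝ)/2)..(1/2), |efun N (x+W) - efun N (x-W)|)
      ≤ ∫ x in (-(1:ℝ)/2)..(1/2), (|efun N (x+W)| + |efun N (x-W)|) := by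
    apply intervalIntegral.integral_mono_on (by norm_num) iL (iR1.add iR2)
    intro x _
    exact abs_sub _ _
  have ie : IntervalIntegrable (fun u => |efun N u|) volume (-1) 1 :=
    abs_efun_intInt N hN1 (-1) 1 (by rw [Set.uIcc_of_le (by norm_num)])
  have step2 : (∫ x in (-(1:ℝ)/2)..(1/2), |efun N (x+W)|) ≤ ∫ u in (-1:ℝ)..1, |efun N u| := by
    have h := integral_comp_add_right (a := -(1:ℝ)/2) (b := 1/2) (fun u => |efun N u|) W
    rw [h]
    apply intervalIntegral.integral_mono_interval (by linarith) (by linarith) (by linarith)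
    · exact Filter.Eventually.of_forall (fun x => abs_nonneg _)
    · exact ie
  have step3 : (∫ x in (-(1:ℝ)/2)..(1/2), |efun N (x-W)|) ≤ ∫ u in (-1:ℝ)..1, |efun N u| := by
    have h := integral_comp_sub_right (a := -(1:ℝ)/2) (b := 1/2) (fun u => |efun N u|) W
    rw [h]
    apply intervalIntegral.integral_mono_interval (by linarith) (by linarith) (by linarith)
    · exact Filter.Eventually.of_forall (fun x => abs_nonneg _)
    · exact ie
  have hsplit : (∫ x in (-(1:ℝ)/2)..(1/2), (|efun N (x+W)| + |efun N (x-W)|))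
      = (∫ x in (-(1:ℝ)/2)..(1/2), |efun N (x+W)|)
        + ∫ x in (-(1:ℝ)/2)..(1/2), |efun N (x-W)| :=
    intervalIntegral.integral_add iR1 iR2
  have htwo := efun_L1_two N hN
  have hlog2 : (2:ℝ)/3 ≤ Real.log 2 := by linarith [Real.log_two_gt_d9]
  have hlogN : Real.log 2 ≤ Real.log N := by
    apply Real.log_le_log (by norm_num) hNR
  have hfinal : 2*(1/(N:ℝ) + Real.log N/(N:ℝ)) ≤ 5 * Real.log N / N := by
    have h1 : (2 - 3*Real.log N)/(N:ℝ) ≤ 0 :=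
      div_nonpos_of_nonpos_of_nonneg (by linarith) hNpos.le
    have h2 : 2*(1/(N:ℝ) + Real.log N/(N:ℝ)) - 5 * Real.log N / N
        = (2 - 3*Real.log N)/(N:ℝ) := by ring
    linarith
  calc (∫ x in (-(1:ℝ)/2)..(1/2), |efun N (x+W) - efun N (x-W)|)
      ≤ ∫ x in (-(1:ℝ)/2)..(1/2), (|efun N (x+W)| + |efun N (x-W)|) := step1
    _ = _ + _ := hsplit
    _ ≤ (∫ u in (-1:ℝ)..1, |efun N u|) + ∫ u in (-1:ℝ)..1, |efun N u| := add_le_add step2 step3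
    _ = 2 * ∫ u in (-1:ℝ)..1, |efun N u| := by ring
    _ ≤ 2*(1/(N:ℝ) + Real.log N/(N:ℝ)) := by linarith
    _ ≤ 5 * Real.log N / N := hfinal
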